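/- Let X be a metric space, F : X ≃ₜ X a homeomorphism, A ⊆ X a closed set, p ∈ A, and z ∈ X with z ∉ A. If p is a cluster point of the backward orbit ((F⁻¹)^[n](z))_{n∈ℕ} of z, then A is not Lyapunov stable for F. (The key instability mechanism of Proposition 3.1: a point off the attractor whose backward orbit accumulates on the attractor destroys Lyapunov stability.) -/

import Mathlib

open Set Function Filter Topology

/-- Lyapunov stability of a set `K` for the map `F`. -/
def IsLyapunovStable {X : Type*} [TopologicalSpace X] (F : X → X) (K : Set X) : Prop :=
  ∀ V : Set X, IsOpen V → K ⊆ V →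
    ∃ W : Set X, IsOpen W ∧ K ⊆ W ∧ ∀ x ∈ W, ∀ n : ℕ, F^[n] x ∈ V

/-- A point off a closed set whose backward orbit accumulates on the set destroys its
Lyapunov stability. -/
theorem stmt7 {X : Type*} [MetricSpace X]
    (F : X ≃ₜ X) (A : Set X) (hA : IsClosed A)
    (p : X) (hp : p ∈ A) (z : X) (hz : z ∉ A)
    (hcl : MapClusterPt p atTop fun n => (⇑F.symm)^[n] z) :
    ¬ IsLyapunovStable (⇑F) A := by
  intro hL
  obtain ⟨W, hWopen, hAW, hW⟩ := hL {z}ᶜ isClosed_singleton.isOpen_compl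
    (fun x hx hxz => hz (by rwa [Set.mem_singleton_iff.mp hxz] at hx))
  have hpW : W ∈ 𝓝 p := hWopen.mem_nhds (hAW hp)
  obtain ⟨n, hn⟩ := (mapClusterPt_iff_frequently.mp hcl W hpW).exists
  have h2 := hW _ hn n
  apply h2
  have : F^[n] ((⇑F.symm)^[n] z) = z :=
    Function.LeftInverse.iterate (fun x => F.apply_symm_apply x) n z
  rw [this]
  rfl
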